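/- Let σ > 0, t ∈ ℝ, and let f : ℝ → ℝ be bounded, measurable and differentiable. Suppose the set A_t := {x ∈ ℝ : f(x) = t} is finite and f'(x) ≠ 0 for every x ∈ A_t. Then the smoothed function satisfies #{x ∈ ℝ : (φ_σ * f)(x) = t} ≤ #A_t; in particular the number of solutions of the level equation at level t does not increase under Gaussian smoothing. -/

import Mathlib

/-- The density of the centered Gaussian distribution `N(0, σ²)` on `ℝ`. -/
noncomputable def gaussianKernel (σ u : ℝ) : ℝ :=
  (σ * Real.sqrt (2 * Real.pi))⁻¹ * Real.exp (-(u ^ 2) / (2 * σ ^ 2))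

open MeasureTheory Real Set Filter

section helpers

lemma exp_mul_le_gauss {c : ℝ} (hc : 0 < c) (b y : ℝ) :
    Real.exp (b * |y|) * Real.exp (-c * y^2) ≤ Real.exp (b^2/(2*c)) * Real.exp (-(c/2) * y^2) := by
  rw [← Real.exp_add, ← Real.exp_add, Real.exp_le_exp]
  have h1 : (0:ℝ) < 2*c := by linarith
  have h2 : b * |y| - c/2 * y^2 ≤ b^2/(2*c) := by
    rw [le_div_iff₀ h1]
    rcases abs_cases y with ⟨h,_⟩|⟨h,_⟩ <;> rw [h] <;>
      nlinarith [sq_nonneg (c*y - b), sq_nonneg (c*y + b)]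
  linarith

lemma integrable_of_le_gauss {h : ℝ → ℝ} (hm : AEStronglyMeasurable h volume) {c : ℝ} (K : ℝ)
    (hc : 0 < c) (hb : ∀ y, |h y| ≤ K * Real.exp (-c * y^2)) : Integrable h := by
  have : Integrable (fun y : ℝ => K * Real.exp (-c*y^2)) := (integrable_exp_neg_mul_sq hc).const_mul K
  exact this.mono' hm (Filter.Eventually.of_forall (fun y => by simpa [Real.norm_eq_abs] using hb y))

lemma abs_le_exp_abs (y : ℝ) : |y| ≤ Real.exp |y| :=
  (Real.add_one_le_exp |y|).trans' (by linarith [abs_nonneg y])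

-- C is nonnegative whenever it bounds
lemma C_nonneg {w : ℝ → ℝ} {c C : ℝ} (hb : ∀ y, |w y| ≤ C * Real.exp (-c * y^2)) : 0 ≤ C := by
  have h := hb 0
  simp at h
  linarith [abs_nonneg (w 0)]

lemma meas_exp_mul {w : ℝ → ℝ} (hw : Measurable w) (x m : ℝ) :
    Measurable (fun y => Real.exp (x * (y - m)) * w y) :=
  ((Real.measurable_exp.comp ((measurable_id.sub_const m).const_mul x))).mul hw

lemma integrable_exp_mul {w : ℝ → ℝ} (hw : Measurable w) {c C : ℝ} (hc : 0 < c)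
    (hb : ∀ y, |w y| ≤ C * Real.exp (-c * y^2)) (x m : ℝ) :
    Integrable (fun y => Real.exp (x * (y - m)) * w y) := by
  have hC := C_nonneg hb
  apply integrable_of_le_gauss ((meas_exp_mul hw x m).aestronglyMeasurable)
    (Real.exp (|x| * |m|) * C * Real.exp (|x|^2/(2*c))) (half_pos hc)
  intro y
  have h1 : |Real.exp (x*(y-m)) * w y| = Real.exp (x*(y-m)) * |w y| := by
    rw [abs_mul, abs_of_pos (Real.exp_pos _)]
  rw [h1]
  calc Real.exp (x*(y-m)) * |w y|
      ≤ (Real.exp (|x| * |m|) * Real.exp (|x| * |y|)) * (C * Real.exp (-c * y^2)) := by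
        apply mul_le_mul _ (hb y) (abs_nonneg _) (by positivity)
        rw [← Real.exp_add, Real.exp_le_exp]
        have e1 : x*(y-m) ≤ |x| * |y - m| := by
          rw [← abs_mul]; exact le_abs_self _
        calc x*(y-m) ≤ |x| * |y - m| := e1
          _ ≤ |x| * (|m| + |y|) := by
              apply mul_le_mul_of_nonneg_left _ (abs_nonneg x)
              calc |y - m| ≤ |y| + |m| := abs_sub _ _
                _ = |m| + |y| := by ring
          _ = |x| * |m| + |x| * |y| := by ring
    _ = (Real.exp (|x| * |m|) * C) * (Real.exp (|x| * |y|) * Real.exp (-c*y^2)) := by ring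
    _ ≤ (Real.exp (|x| * |m|) * C) * (Real.exp (|x|^2/(2*c)) * Real.exp (-(c/2)*y^2)) := by
        apply mul_le_mul_of_nonneg_left (exp_mul_le_gauss hc _ _) (by positivity)
    _ = Real.exp (|x| * |m|) * C * Real.exp (|x|^2/(2*c)) * Real.exp (-(c/2)*y^2) := by ring

end helpers

lemma deriv_pt_bound {w : ℝ → ℝ} {c C : ℝ} (hc : 0 < c)
    (hb : ∀ y, |w y| ≤ C * Real.exp (-c * y^2)) (a b : ℝ) :
    ∀ x, |x| ≤ b → ∀ y,
      |(y - a) * Real.exp (x * (y - a)) * w y|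
        ≤ (1 + |a|) * Real.exp (b * |a|) * C * Real.exp ((b+1)^2/(2*c))
            * Real.exp (-(c/2) * y^2) := by
  intro x hx y
  have hC := C_nonneg hb
  have hb0 : 0 ≤ b := (abs_nonneg x).trans hx
  have h1 : |(y - a) * Real.exp (x*(y-a)) * w y| = |y - a| * Real.exp (x*(y-a)) * |w y| := by
    rw [abs_mul, abs_mul, abs_of_pos (Real.exp_pos _)]
  have h2 : |y - a| ≤ (1 + |a|) * Real.exp |y| := by
    have e1 : |y - a| ≤ |y| + |a| := abs_sub _ _
    have e2 : |y| ≤ Real.exp |y| := abs_le_exp_abs y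
    have e3 : |a| ≤ |a| * Real.exp |y| := le_mul_of_one_le_right (abs_nonneg a) (Real.one_le_exp (abs_nonneg y))
    calc |y - a| ≤ |y| + |a| := e1
      _ ≤ Real.exp |y| + |a| * Real.exp |y| := by linarith
      _ = (1 + |a|) * Real.exp |y| := by ring
  have h3 : Real.exp (x*(y-a)) ≤ Real.exp (b * |y| + b * |a|) := by
    rw [Real.exp_le_exp]
    have e1 : x*(y-a) ≤ |x| * |y - a| := by rw [← abs_mul]; exact le_abs_self _
    have e2 : |y - a| ≤ |y| + |a| := abs_sub _ _
    have e3 : |x| * |y - a| ≤ b * (|y| + |a|) :=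
      mul_le_mul hx e2 (abs_nonneg _) hb0
    calc x*(y-a) ≤ |x| * |y - a| := e1
      _ ≤ b * (|y| + |a|) := e3
      _ = b * |y| + b * |a| := by ring
  rw [h1]
  calc |y - a| * Real.exp (x*(y-a)) * |w y|
      ≤ ((1 + |a|) * Real.exp |y|) * Real.exp (b * |y| + b * |a|) * (C * Real.exp (-c * y^2)) := by
        apply mul_le_mul _ (hb y) (abs_nonneg _) (by positivity)
        exact mul_le_mul h2 h3 (Real.exp_pos _).le (by positivity)
    _ = ((1 + |a|) * Real.exp (b * |a|) * C) * (Real.exp ((b+1) * |y|) * Real.exp (-c * y^2)) := by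
        simp only [add_mul, one_mul, Real.exp_add]
        ring
    _ ≤ ((1 + |a|) * Real.exp (b * |a|) * C) * (Real.exp ((b+1)^2/(2*c)) * Real.exp (-(c/2) * y^2)) := by
        exact mul_le_mul_of_nonneg_left (exp_mul_le_gauss hc _ _) (by positivity)
    _ = (1 + |a|) * Real.exp (b * |a|) * C * Real.exp ((b+1)^2/(2*c)) * Real.exp (-(c/2) * y^2) := by
        ring

lemma finite_card_le_of_between {Z Z₁ : Set ℝ} (h₁ : Z₁.Finite)
    (h : ∀ x ∈ Z, ∀ y ∈ Z, x < y → ∃ z ∈ Z₁, x < z ∧ z < y) :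
    Z.Finite ∧ Z.ncard ≤ Z₁.ncard + 1 := by
  set g : ℝ → ℕ := fun z => (Z₁ ∩ Set.Iio z).ncard with hg
  have hmono : ∀ x ∈ Z, ∀ y ∈ Z, x < y → g x < g y := by
    intro x hx y hy hxy
    obtain ⟨z, hz, hxz, hzy⟩ := h x hx y hy hxy
    apply Set.ncard_lt_ncard
    · constructor
      · exact Set.inter_subset_inter_right _ (Set.Iio_subset_Iio hxy.le)
      · intro hsub
        have : z ∈ Z₁ ∩ Set.Iio x := hsub ⟨hz, hzy⟩
        exact absurd this.2 (not_lt.mpr hxz.le)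
    · exact h₁.inter_of_left _
  have hinj : Set.InjOn g Z := by
    intro x hx y hy hxy
    rcases lt_trichotomy x y with h' | h' | h'
    · exact absurd hxy (hmono x hx y hy h').ne
    · exact h'
    · exact absurd hxy.symm (hmono y hy x hx h').ne
  have hgle : ∀ z, g z ≤ Z₁.ncard := fun z =>
    Set.ncard_le_ncard (Set.inter_subset_left) h₁
  have himg : g '' Z ⊆ ↑(Finset.Iic Z₁.ncard) := by
    intro n hn
    obtain ⟨z, _, rfl⟩ := hn
    simpa using hgle z
  have hZfin : Z.Finite := Set.Finite.of_finite_image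
    ((Finset.Iic Z₁.ncard).finite_toSet.subset himg) hinj
  refine ⟨hZfin, ?_⟩
  calc Z.ncard = (g '' Z).ncard := (Set.ncard_image_of_injOn hinj).symm
    _ ≤ (↑(Finset.Iic Z₁.ncard) : Set ℕ).ncard :=
        Set.ncard_le_ncard himg (Finset.Iic Z₁.ncard).finite_toSet
    _ = Z₁.ncard + 1 := by rw [Set.ncard_coe_finset]; simp

lemma transform_zeros (S : Finset ℝ) :
    ∀ (w : ℝ → ℝ) (c C : ℝ), 0 < c → Measurable w →
      (∀ y, |w y| ≤ C * Real.exp (-c * y^2)) →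
      (∀ y, 0 ≤ (∏ a ∈ S, (y - a)) * w y) →
      0 < volume (Function.support w) →
      {x : ℝ | (∫ y, Real.exp (x * y) * w y) = 0}.Finite ∧
        {x : ℝ | (∫ y, Real.exp (x * y) * w y) = 0}.ncard ≤ S.card := by
  induction S using Finset.induction_on with
  | empty =>
    intro w c C hc hw hb hsign hsupp
    have hpos : ∀ x : ℝ, 0 < ∫ y, Real.exp (x * y) * w y := by
      intro x
      have hint : Integrable (fun y => Real.exp (x * y) * w y) := by
        have := integrable_exp_mul hw hc hb x 0
        simpa using this
      rw [integral_pos_iff_support_of_nonneg]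
      · have hs : Function.support (fun y => Real.exp (x*y) * w y) = Function.support w := by
          ext y
          simp only [Function.mem_support]
          constructor
          · intro h h'; exact h (by rw [h', mul_zero])
          · intro h h'; exact h ((mul_eq_zero.mp h').resolve_left (Real.exp_ne_zero _))
        rw [hs]; exact hsupp
      · intro y
        have := hsign y
        simp only [Finset.prod_empty, one_mul] at this
        exact mul_nonneg (Real.exp_pos _).le this
      · exact hint
    have hempty : {x : ℝ | (∫ y, Real.exp (x*y) * w y) = 0} = ∅ := by
      ext x; simp [(hpos x).ne']
    rw [hempty]; simp
  | @insert a s ha ih =>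
    intro w c C hc hw hb hsign hsupp
    have hC := C_nonneg hb
    set w' : ℝ → ℝ := fun y => (y - a) * w y with hw'def
    have hw' : Measurable w' := (measurable_id.sub_const a).mul hw
    set C' := (1 + |a|) * Real.exp (0 * |a|) * C * Real.exp ((0+1)^2/(2*c)) with hC'def
    have hb' : ∀ y, |w' y| ≤ C' * Real.exp (-(c/2) * y^2) := by
      intro y
      have h := deriv_pt_bound hc hb a 0 0 (by simp) y
      simpa [w', C'] using h
    have hsign' : ∀ y, 0 ≤ (∏ b ∈ s, (y - b)) * w' y := by
      intro y
      have h := hsign y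
      rw [Finset.prod_insert ha] at h
      have he : (∏ b ∈ s, (y - b)) * w' y = (y - a) * (∏ b ∈ s, (y - b)) * w y := by
        simp only [w']; ring
      rw [he]; exact h
    have hsupp' : 0 < volume (Function.support w') := by
      have hsub : Function.support w \ {a} ⊆ Function.support w' := by
        intro y hy
        simp only [Function.mem_support, Set.mem_diff, Set.mem_singleton_iff] at hy ⊢
        exact mul_ne_zero (sub_ne_zero.mpr hy.2) hy.1
      calc 0 < volume (Function.support w) := hsupp
        _ = volume (Function.support w \ {a}) := (measure_diff_null (measure_singleton a)).symm
        _ ≤ volume (Function.support w') := measure_mono hsub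
    obtain ⟨hZ1fin, hZ1card⟩ := ih w' (c/2) C' (half_pos hc) hw' hb' hsign' hsupp'
    set F : ℝ → ℝ := fun x => ∫ y, Real.exp (x * y) * w y with hF
    set F1 : ℝ → ℝ := fun x => ∫ y, Real.exp (x * y) * w' y with hF1
    set H : ℝ → ℝ := fun x => ∫ y, Real.exp (x * (y - a)) * w y with hH
    have hHeq : ∀ x, H x = Real.exp (-(a * x)) * F x := by
      intro x
      have hpt : ∀ y, Real.exp (x * (y - a)) * w y
          = Real.exp (-(a*x)) * (Real.exp (x * y) * w y) := by
        intro y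
        rw [← mul_assoc, ← Real.exp_add]
        ring_nf
      simp only [H, F, hpt, MeasureTheory.integral_const_mul]
    have hderiv : ∀ x₀ : ℝ, HasDerivAt H (Real.exp (-(a * x₀)) * F1 x₀) x₀ := by
      intro x₀
      set b := |x₀| + 1 with hbdef
      set K := (1 + |a|) * Real.exp (b * |a|) * C * Real.exp ((b+1)^2/(2*c)) with hK
      have main := hasDerivAt_integral_of_dominated_loc_of_deriv_le
        (F := fun x y => Real.exp (x * (y - a)) * w y)
        (F' := fun x y => (y - a) * Real.exp (x * (y - a)) * w y)
        (bound := fun y => K * Real.exp (-(c/2) * y^2))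
        (μ := volume) (x₀ := x₀) (s := Metric.ball x₀ 1) (Metric.ball_mem_nhds x₀ one_pos)
        (Filter.Eventually.of_forall fun x => (meas_exp_mul hw x a).aestronglyMeasurable)
        (integrable_exp_mul hw hc hb x₀ a)
        (((measurable_id.sub_const a).mul
            (Real.measurable_exp.comp ((measurable_id.sub_const a).const_mul x₀))).mul
          hw).aestronglyMeasurable
        (Filter.Eventually.of_forall fun y => by
          intro x hx
          rw [Real.norm_eq_abs]
          apply deriv_pt_bound hc hb a b x _ y
          have hd : dist x x₀ < 1 := Metric.mem_ball.mp hx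
          rw [Real.dist_eq] at hd
          calc |x| = |x₀ + (x - x₀)| := by ring_nf
            _ ≤ |x₀| + |x - x₀| := abs_add_le _ _
            _ ≤ |x₀| + 1 := by linarith
        )
        ((integrable_exp_neg_mul_sq (half_pos hc)).const_mul K)
        (Filter.Eventually.of_forall fun y => by
          intro x hx
          have h := (((hasDerivAt_id x).mul_const (y-a)).exp).mul_const (w y)
          refine h.congr_deriv ?_
          simp only [id_eq]
          ring)
      obtain ⟨-, hmain⟩ := main
      have hrw : (∫ y, (y - a) * Real.exp (x₀ * (y - a)) * w y)
          = Real.exp (-(a * x₀)) * F1 x₀ := by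
        have hpt : ∀ y, (y - a) * Real.exp (x₀ * (y - a)) * w y
            = Real.exp (-(a*x₀)) * (Real.exp (x₀ * y) * w' y) := by
          intro y
          simp only [w']
          rw [show x₀*(y-a) = -(a*x₀) + x₀*y by ring, Real.exp_add]
          ring
        simp only [hpt, MeasureTheory.integral_const_mul]
        rfl
      rw [hrw] at hmain
      exact hmain
    have hbetween : ∀ x ∈ {x : ℝ | F x = 0}, ∀ y ∈ {x : ℝ | F x = 0}, x < y →
        ∃ z ∈ {x : ℝ | F1 x = 0}, x < z ∧ z < y := by
      intro x hx y hy hxy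
      have hHx : H x = 0 := by rw [hHeq x, Set.mem_setOf_eq.mp hx, mul_zero]
      have hHy : H y = 0 := by rw [hHeq y, Set.mem_setOf_eq.mp hy, mul_zero]
      obtain ⟨z, hz, hz0⟩ := exists_hasDerivAt_eq_zero hxy
        (fun z _ => (hderiv z).continuousAt.continuousWithinAt)
        (by rw [hHx, hHy]) (fun z _ => hderiv z)
      refine ⟨z, ?_, hz.1, hz.2⟩
      have : F1 z = 0 := (mul_eq_zero.mp hz0).resolve_left (Real.exp_ne_zero _)
      exact this
    obtain ⟨hfin, hcard⟩ := finite_card_le_of_between hZ1fin hbetween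
    refine ⟨hfin, hcard.trans ?_⟩
    rw [Finset.card_insert_of_notMem ha]
    omega

lemma sign_const (t : ℝ) (f : ℝ → ℝ) (hdiff : Differentiable ℝ f)
    (hA : {x : ℝ | f x = t}.Finite) (hA' : ∀ x, f x = t → deriv f x ≠ 0) :
    ∃ ε : ℝ, (ε = 1 ∨ ε = -1) ∧
      ∀ y, 0 ≤ (∏ a ∈ hA.toFinset, (y - a)) * (ε * (f y - t)) := by
  set P : ℝ → ℝ := fun y => ∏ a ∈ hA.toFinset, (y - a) with hPdef
  set h : ℝ → ℝ := fun y => P y * (f y - t) with hhdef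
  have hPcont : Continuous P := by
    apply continuous_finset_prod
    exact fun a _ => continuous_id.sub continuous_const
  have hcont : Continuous h := hPcont.mul (hdiff.continuous.sub continuous_const)
  have hP0 : ∀ y, P y = 0 → f y = t := by
    intro y hy
    obtain ⟨a, haF, hay⟩ := Finset.prod_eq_zero_iff.mp hy
    have : y = a := by linarith [sub_eq_zero.mp hay]
    rw [this]
    exact hA.mem_toFinset.mp haF
  have hht : ∀ y, f y = t → h y = 0 := by
    intro y hy
    simp only [h, hy, sub_self, mul_zero]
  have hL : ∀ a, f a = t → ∃ L, L ≠ 0 ∧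
      Filter.Tendsto (fun y => h y / (y - a)^2) (nhdsWithin a {a}ᶜ) (nhds L) := by
    intro a hat
    have haF : a ∈ hA.toFinset := hA.mem_toFinset.mpr hat
    set Q : ℝ → ℝ := fun y => ∏ b ∈ hA.toFinset.erase a, (y - b) with hQdef
    have hQcont : Continuous Q := by
      apply continuous_finset_prod
      exact fun b _ => continuous_id.sub continuous_const
    have hQa : Q a ≠ 0 := by
      apply Finset.prod_ne_zero_iff.mpr
      intro b hb
      exact sub_ne_zero.mpr (Finset.ne_of_mem_erase hb).symm
    have hslope : Filter.Tendsto (slope f a) (nhdsWithin a {a}ᶜ) (nhds (deriv f a)) :=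
      hasDerivAt_iff_tendsto_slope.mp (hdiff a).hasDerivAt
    have hQt : Filter.Tendsto Q (nhdsWithin a {a}ᶜ) (nhds (Q a)) :=
      (hQcont.tendsto a).mono_left nhdsWithin_le_nhds
    refine ⟨Q a * deriv f a, mul_ne_zero hQa (hA' a hat), ?_⟩
    apply (hQt.mul hslope).congr'
    filter_upwards [self_mem_nhdsWithin] with y hy
    have hya : y - a ≠ 0 := sub_ne_zero.mpr hy
    have hPy : P y = (y - a) * Q y := (Finset.mul_prod_erase _ _ haF).symm
    rw [slope_def_field]
    simp only [h, hPy, hat]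
    field_simp
  set U := {y | 0 < h y} ∪ {a | f a = t ∧ ∀ᶠ y in nhdsWithin a {a}ᶜ, 0 < h y} with hUdef
  set V := {y | h y < 0} ∪ {a | f a = t ∧ ∀ᶠ y in nhdsWithin a {a}ᶜ, h y < 0} with hVdef
  have hUopen : IsOpen U := by
    rw [isOpen_iff_mem_nhds]
    rintro y (hy | ⟨hyt, hyev⟩)
    · exact Filter.mem_of_superset ((hcont.tendsto y) (Ioi_mem_nhds hy))
        (fun z hz => Or.inl hz)
    · have hev : ∀ᶠ z in nhds y, z ∈ ({y}ᶜ : Set ℝ) → 0 < h z :=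
        eventually_nhdsWithin_iff.mp hyev
      apply Filter.mem_of_superset hev
      intro z hz
      by_cases hzy : z = y
      · subst hzy; exact Or.inr ⟨hyt, hyev⟩
      · exact Or.inl (hz (Set.mem_compl_singleton_iff.mpr hzy))
  have hVopen : IsOpen V := by
    rw [isOpen_iff_mem_nhds]
    rintro y (hy | ⟨hyt, hyev⟩)
    · exact Filter.mem_of_superset ((hcont.tendsto y) (Iio_mem_nhds hy))
        (fun z hz => Or.inl hz)
    · have hev : ∀ᶠ z in nhds y, z ∈ ({y}ᶜ : Set ℝ) → h z < 0 :=
        eventually_nhdsWithin_iff.mp hyev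
      apply Filter.mem_of_superset hev
      intro z hz
      by_cases hzy : z = y
      · subst hzy; exact Or.inr ⟨hyt, hyev⟩
      · exact Or.inl (hz (Set.mem_compl_singleton_iff.mpr hzy))
  have hdisj : ∀ y, y ∈ U → y ∈ V → False := by
    rintro y (h1 | ⟨h1t, h1e⟩) (h2 | ⟨h2t, h2e⟩)
    · simp only [Set.mem_setOf_eq] at h1 h2; linarith
    · have := hht y h2t; simp only [Set.mem_setOf_eq] at h1; linarith
    · have := hht y h1t; simp only [Set.mem_setOf_eq] at h2; linarith
    · obtain ⟨z, hz1, hz2⟩ := (h1e.and h2e).exists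
      linarith
  have hsq : ∀ z y : ℝ, z ≠ y → (0:ℝ) < (z - y)^2 := by
    intro z y hzy
    exact lt_of_le_of_ne (sq_nonneg _) (Ne.symm (pow_ne_zero 2 (sub_ne_zero.mpr hzy)))
  have hcover : ∀ y, y ∈ U ∨ y ∈ V := by
    intro y
    by_cases hyt : f y = t
    · obtain ⟨L, hL0, hLt⟩ := hL y hyt
      rcases hL0.lt_or_gt with hneg | hpos
      · right; right
        refine ⟨hyt, ?_⟩
        have hev := hLt (Iio_mem_nhds hneg)
        filter_upwards [hev, self_mem_nhdsWithin] with z hz hzy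
        simp only [Set.mem_preimage, Set.mem_Iio] at hz
        have hzz := hsq z y (Set.mem_compl_singleton_iff.mp hzy)
        rcases div_neg_iff.mp hz with ⟨_, hc⟩ | ⟨hc, _⟩
        · linarith
        · exact hc
      · left; right
        refine ⟨hyt, ?_⟩
        have hev := hLt (Ioi_mem_nhds hpos)
        filter_upwards [hev, self_mem_nhdsWithin] with z hz hzy
        simp only [Set.mem_preimage, Set.mem_Ioi] at hz
        have hzz := hsq z y (Set.mem_compl_singleton_iff.mp hzy)
        rcases div_pos_iff.mp hz with ⟨hc, _⟩ | ⟨_, hc⟩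
        · exact hc
        · linarith
    · have hPne : P y ≠ 0 := fun h0 => hyt (hP0 y h0)
      have hne : h y ≠ 0 := mul_ne_zero hPne (sub_ne_zero.mpr hyt)
      rcases hne.lt_or_gt with hn | hp
      · right; left; exact hn
      · left; left; exact hp
  have hUV : U = Vᶜ := by
    ext y
    constructor
    · intro hy hv; exact hdisj y hy hv
    · intro hy; exact (hcover y).resolve_right hy
  have hclopen : IsClopen U := ⟨by rw [hUV]; exact isClosed_compl_iff.mpr hVopen, hUopen⟩
  rcases isClopen_iff.mp hclopen with hUe | hUu
  · refine ⟨-1, Or.inr rfl, fun y => ?_⟩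
    have hyV : y ∈ V := by
      rcases hcover y with hyU | hyV
      · rw [hUe] at hyU; exact absurd hyU (Set.notMem_empty y)
      · exact hyV
    have hle : h y ≤ 0 := by
      rcases hyV with h1 | ⟨h1t, _⟩
      · exact le_of_lt h1
      · exact le_of_eq (hht y h1t)
    have : P y * (-1 * (f y - t)) = -(h y) := by simp only [h]; ring
    rw [this]
    linarith
  · refine ⟨1, Or.inl rfl, fun y => ?_⟩
    have hyU : y ∈ U := by rw [hUu]; trivial
    have hge : 0 ≤ h y := by
      rcases hyU with h1 | ⟨h1t, _⟩
      · exact le_of_lt h1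
      · exact ge_of_eq (hht y h1t)
    have : P y * (1 * (f y - t)) = h y := by simp only [h]; ring
    rw [this]
    exact hge

/-- **Non-increasing level-crossing count under Gaussian smoothing.** If `f` is bounded,
measurable and differentiable, the level set `A_t = {x : f x = t}` is finite, and `f' ≠ 0`
on `A_t`, then the level set of the Gaussian-smoothed function at level `t` is finite with
cardinality at most that of `A_t`. -/
theorem level_count_nonincreasing
    (σ : ℝ) (hσ : 0 < σ) (t : ℝ) (f : ℝ → ℝ)
    (hbd : ∃ C, ∀ x, |f x| ≤ C) (hmeas : Measurable f) (hdiff : Differentiable ℝ f)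
    (hA : {x : ℝ | f x = t}.Finite)
    (hA' : ∀ x, f x = t → deriv f x ≠ 0) :
    {x : ℝ | (∫ u, gaussianKernel σ u * f (x - u)) = t}.Finite ∧
      {x : ℝ | (∫ u, gaussianKernel σ u * f (x - u)) = t}.ncard
        ≤ {x : ℝ | f x = t}.ncard := by
  obtain ⟨C0, hC0⟩ := hbd
  obtain ⟨ε, hε, hsign⟩ := sign_const t f hdiff hA hA'
  have hε1 : |ε| = 1 := by rcases hε with rfl | rfl <;> simp
  have hεne : ε ≠ 0 := by rcases hε with rfl | rfl <;> norm_num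
  have hσ2 : (0:ℝ) < σ^2 := by positivity
  set c : ℝ := (2*σ^2)⁻¹ with hc
  have hcpos : 0 < c := by positivity
  set K : ℝ := (σ * Real.sqrt (2 * Real.pi))⁻¹ with hK
  have hKpos : 0 < K := by
    rw [hK]
    have h2π : 0 < Real.sqrt (2 * Real.pi) := Real.sqrt_pos.mpr (by positivity)
    positivity
  set w : ℝ → ℝ := fun y => Real.exp (-(y^2)/(2*σ^2)) * (ε * (f y - t)) with hwdef
  have hwmeas : Measurable w :=
    (Real.measurable_exp.comp (((measurable_id.pow_const 2).neg).div_const _)).mul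
      ((hmeas.sub measurable_const).const_mul ε)
  have hexp_eq : ∀ y : ℝ, -(y^2)/(2*σ^2) = -c * y^2 := by
    intro y; rw [hc]; field_simp
  have hwb : ∀ y, |w y| ≤ (C0 + |t|) * Real.exp (-c * y^2) := by
    intro y
    show |Real.exp (-(y^2)/(2*σ^2)) * (ε * (f y - t))| ≤ _
    rw [abs_mul, abs_of_pos (Real.exp_pos _), abs_mul, hε1, one_mul, hexp_eq y]
    calc Real.exp (-c*y^2) * |f y - t|
        ≤ Real.exp (-c*y^2) * (C0 + |t|) :=
          mul_le_mul_of_nonneg_left ((abs_sub _ _).trans (add_le_add_left (hC0 y) _))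
            (Real.exp_pos _).le
      _ = (C0 + |t|) * Real.exp (-c*y^2) := mul_comm _ _
  have hsign' : ∀ y, 0 ≤ (∏ a ∈ hA.toFinset, (y - a)) * w y := by
    intro y
    have h1 := hsign y
    have he : (∏ a ∈ hA.toFinset, (y - a)) * w y
        = Real.exp (-(y^2)/(2*σ^2)) * ((∏ a ∈ hA.toFinset, (y - a)) * (ε * (f y - t))) := by
      simp only [hwdef]; ring
    rw [he]
    exact mul_nonneg (Real.exp_pos _).le h1
  have hwsupp : 0 < volume (Function.support w) := by
    have hsub : {y : ℝ | f y = t}ᶜ ⊆ Function.support w := by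
      intro y hy
      simp only [Set.mem_compl_iff, Set.mem_setOf_eq] at hy
      simp only [Function.mem_support, hwdef]
      exact mul_ne_zero (Real.exp_ne_zero _) (mul_ne_zero hεne (sub_ne_zero.mpr hy))
    by_contra hcon
    push_neg at hcon
    have h0 : volume (Function.support w) = 0 := le_antisymm hcon zero_le
    have h1 : volume ({y : ℝ | f y = t}ᶜ) = 0 := measure_mono_null hsub h0
    have h2 : volume ({y : ℝ | f y = t}) = 0 := hA.measure_zero _
    have huniv : volume (Set.univ : Set ℝ) = 0 := by
      rw [← Set.union_compl_self {y : ℝ | f y = t}]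
      exact le_antisymm ((measure_union_le _ _).trans (by rw [h1, h2]; simp)) zero_le
    rw [Real.volume_univ] at huniv
    exact absurd huniv (by simp)
  obtain ⟨hZfin, hZcard⟩ :=
    transform_zeros hA.toFinset w c (C0 + |t|) hcpos hwmeas hwb hsign' hwsupp
  set T : ℝ → ℝ := fun z => ∫ y, Real.exp (z*y) * w y with hT
  have hker_eq : ∀ u : ℝ, gaussianKernel σ u = K * Real.exp (-c * u^2) := by
    intro u
    rw [gaussianKernel, ← hK, ← hexp_eq u]
  have hker_fn : gaussianKernel σ = fun u => K * Real.exp (-c * u^2) := funext hker_eq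
  have hker_int : Integrable (gaussianKernel σ) := by
    rw [hker_fn]; exact (integrable_exp_neg_mul_sq hcpos).const_mul K
  have hker_meas : Measurable (gaussianKernel σ) := by
    rw [hker_fn]
    exact (Real.measurable_exp.comp ((measurable_id.pow_const 2).const_mul (-c))).const_mul K
  have hker_pos : ∀ u, 0 < gaussianKernel σ u := by
    intro u; rw [hker_eq]; positivity
  have hker_total : ∫ u, gaussianKernel σ u = 1 := by
    have h1 : ∫ u, gaussianKernel σ u = K * ∫ u : ℝ, Real.exp (-c*u^2) := by
      simp only [hker_eq]
      rw [MeasureTheory.integral_const_mul]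
    rw [h1, integral_gaussian]
    have h2 : Real.pi / c = σ^2 * (2*Real.pi) := by rw [hc]; field_simp
    rw [h2, Real.sqrt_mul (sq_nonneg σ), Real.sqrt_sq hσ.le, hK]
    rw [inv_mul_cancel₀]
    have h2π : 0 < Real.sqrt (2 * Real.pi) := Real.sqrt_pos.mpr (by positivity)
    positivity
  have hmain : ∀ x : ℝ, (∫ u, gaussianKernel σ u * f (x - u)) - t
      = (K * ε * Real.exp (-(x^2)/(2*σ^2))) * T (x/σ^2) := by
    intro x
    have hint1 : Integrable (fun u => gaussianKernel σ u * f (x - u)) := by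
      apply Integrable.mono' (hker_int.const_mul C0)
      · exact (hker_meas.mul
          (hmeas.comp (measurable_const.sub measurable_id))).aestronglyMeasurable
      · apply Filter.Eventually.of_forall
        intro u
        rw [Real.norm_eq_abs, abs_mul, abs_of_pos (hker_pos u)]
        calc gaussianKernel σ u * |f (x-u)|
            ≤ gaussianKernel σ u * C0 :=
              mul_le_mul_of_nonneg_left (hC0 _) (hker_pos u).le
          _ = C0 * gaussianKernel σ u := mul_comm _ _
    have hint2 : Integrable (fun u => gaussianKernel σ u * t) := hker_int.mul_const t
    have step1 : (∫ u, gaussianKernel σ u * f (x - u)) - t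
        = ∫ u, gaussianKernel σ u * (f (x - u) - t) := by
      calc (∫ u, gaussianKernel σ u * f (x - u)) - t
          = (∫ u, gaussianKernel σ u * f (x - u)) - ∫ u, gaussianKernel σ u * t := by
            rw [MeasureTheory.integral_mul_const, hker_total, one_mul]
        _ = ∫ u, (gaussianKernel σ u * f (x-u) - gaussianKernel σ u * t) :=
            (MeasureTheory.integral_sub hint1 hint2).symm
        _ = ∫ u, gaussianKernel σ u * (f (x-u) - t) := by
            congr 1; funext u; ring
    set G : ℝ → ℝ := fun y => gaussianKernel σ (x - y) * (f y - t) with hG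
    have step2 : ∫ u, gaussianKernel σ u * (f (x-u) - t) = ∫ y, G y := by
      rw [← MeasureTheory.integral_sub_left_eq_self G volume x]
      congr 1
      funext u
      simp only [hG]
      rw [show x - (x - u) = u by ring]
    have hε2 : ε * ε = 1 := by rcases hε with rfl | rfl <;> norm_num
    have step3 : ∀ y, G y
        = (K * ε * Real.exp (-(x^2)/(2*σ^2))) * (Real.exp ((x/σ^2) * y) * w y) := by
      intro y
      simp only [hG, hwdef]
      rw [hker_eq (x - y)]
      have hsplit : -c * (x - y)^2 = -(x^2)/(2*σ^2) + ((x/σ^2)*y + (-(y^2)/(2*σ^2))) := by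
        rw [hc]; field_simp; ring
      rw [hsplit, Real.exp_add, Real.exp_add]
      linear_combination (-(K * Real.exp (-(x^2)/(2*σ^2)) * Real.exp ((x/σ^2)*y)
        * Real.exp (-(y^2)/(2*σ^2)) * (f y - t))) * hε2
    rw [step1, step2]
    simp only [step3]
    rw [MeasureTheory.integral_const_mul]
  have hset : {x : ℝ | (∫ u, gaussianKernel σ u * f (x - u)) = t}
      = (fun z => σ^2 * z) '' {z : ℝ | T z = 0} := by
    ext x
    simp only [Set.mem_setOf_eq, Set.mem_image]
    constructor
    · intro hx
      refine ⟨x/σ^2, ?_, by field_simp⟩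
      have h1 := hmain x
      rw [hx, sub_self] at h1
      have h2 : K * ε * Real.exp (-(x^2)/(2*σ^2)) ≠ 0 :=
        mul_ne_zero (mul_ne_zero hKpos.ne' hεne) (Real.exp_ne_zero _)
      exact (mul_eq_zero.mp h1.symm).resolve_left h2
    · rintro ⟨z, hz, rfl⟩
      have h1 := hmain (σ^2 * z)
      have hzz : (σ^2 * z)/σ^2 = z := by field_simp
      rw [hzz, Set.mem_setOf_eq.mp hz, mul_zero] at h1
      linarith
  rw [hset]
  constructor
  · exact hZfin.image _
  · rw [Set.ncard_image_of_injective _ (mul_right_injective₀ hσ2.ne')]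
    refine hZcard.trans ?_
    rw [Set.ncard_eq_toFinset_card _ hA]
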